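/- arXiv:1407.5599 — 2 statements merged into one kernel-verified Lean document; each statement's English description precedes it below -/
import Mathlib

section
/- Let ν > 0, θ > 0 with 1 ≤ θν < 2, γ_i = θ/i and a_t^i = -γ_i ∏_{j=i+1}^t (1 - γ_j ν). Then ∑_{i=1}^t γ_i |a_t^i| ≤ θ^2 (ln t + 1)/t. -/
lemma telescope_prod (i : ℕ) (hi : 1 ≤ i) (t : ℕ) (hit : i ≤ t) :
    ∏ j ∈ Finset.Icc (i + 1) t, ((j : ℝ) - 1) / j = i / t := by
  induction t, hit using Nat.le_induction with
  | base =>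
    rw [Finset.Icc_eq_empty (by omega : ¬ i + 1 ≤ i), Finset.prod_empty,
      div_self (Nat.cast_ne_zero.mpr (by omega))]
  | succ n hn ih =>
    rw [Finset.prod_Icc_succ_top (by omega), ih]
    have hn0 : (0:ℝ) < n := Nat.cast_pos.mpr (by omega)
    push_cast
    field_simp
    ring

/-- If 1 ≤ θν < 2 then ∑_{i=1}^t γ_i |a_t^i| ≤ θ² (ln t + 1)/t. -/
theorem gamma_coeff_sum_bound_small (ν θ : ℝ) (hν : 0 < ν) (hθ : 0 < θ)
    (hθν1 : 1 ≤ θ * ν) (hθν2 : θ * ν < 2) (t : ℕ) (ht : 1 ≤ t) :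
    ∑ i ∈ Finset.Icc 1 t,
        (θ / i) * |(-(θ / i) * ∏ j ∈ Finset.Icc (i + 1) t, (1 - (θ / j) * ν))|
      ≤ θ ^ 2 * (Real.log t + 1) / t := by
  have ht0 : (0:ℝ) < t := by positivity
  have key : ∀ i ∈ Finset.Icc 1 t,
      (θ / i) * |(-(θ / i) * ∏ j ∈ Finset.Icc (i + 1) t, (1 - (θ / j) * ν))|
        ≤ θ ^ 2 / t * (i : ℝ)⁻¹ := by
    intro i hi
    rw [Finset.mem_Icc] at hi
    obtain ⟨hi1, hit⟩ := hi
    have hi0 : (0:ℝ) < i := Nat.cast_pos.mpr (by omega)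
    have hfac : ∀ j ∈ Finset.Icc (i + 1) t, (0:ℝ) ≤ 1 - (θ / j) * ν := by
      intro j hj
      rw [Finset.mem_Icc] at hj
      have hj2 : 2 ≤ j := by omega
      have hj0 : (0:ℝ) < j := Nat.cast_pos.mpr (by omega)
      have : θ / j * ν = θ * ν / j := by ring
      rw [this, sub_nonneg, div_le_one hj0]
      calc θ * ν ≤ 2 := le_of_lt hθν2
        _ ≤ (j:ℝ) := by exact_mod_cast hj2
    have hprod0 : (0:ℝ) ≤ ∏ j ∈ Finset.Icc (i + 1) t, (1 - (θ / j) * ν) :=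
      Finset.prod_nonneg hfac
    have hprodle : ∏ j ∈ Finset.Icc (i + 1) t, (1 - (θ / j) * ν)
        ≤ ∏ j ∈ Finset.Icc (i + 1) t, ((j : ℝ) - 1) / j := by
      apply Finset.prod_le_prod hfac
      intro j hj
      rw [Finset.mem_Icc] at hj
      have hj0 : (0:ℝ) < j := Nat.cast_pos.mpr (by omega)
      have h1 : (1:ℝ)/j ≤ θ / j * ν := by
        rw [div_mul_eq_mul_div]
        gcongr
      have : ((j:ℝ) - 1)/j = 1 - 1/j := by field_simp
      rw [this]
      linarith
    rw [telescope_prod i hi1 t hit] at hprodle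
    rw [abs_mul, abs_neg, abs_of_nonneg (le_of_lt (div_pos hθ hi0)),
      abs_of_nonneg hprod0]
    calc θ / i * (θ / i * ∏ j ∈ Finset.Icc (i + 1) t, (1 - (θ / j) * ν))
        ≤ θ / i * (θ / i * ((i:ℝ) / t)) := by
          apply mul_le_mul_of_nonneg_left _ (le_of_lt (div_pos hθ hi0))
          exact mul_le_mul_of_nonneg_left hprodle (le_of_lt (div_pos hθ hi0))
      _ = θ ^ 2 / t * (i : ℝ)⁻¹ := by field_simp
  calc ∑ i ∈ Finset.Icc 1 t,
        (θ / i) * |(-(θ / i) * ∏ j ∈ Finset.Icc (i + 1) t, (1 - (θ / j) * ν))|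
      ≤ ∑ i ∈ Finset.Icc 1 t, θ ^ 2 / t * (i : ℝ)⁻¹ := Finset.sum_le_sum key
    _ = θ ^ 2 / t * ∑ i ∈ Finset.Icc 1 t, (i : ℝ)⁻¹ := by rw [Finset.mul_sum]
    _ ≤ θ ^ 2 / t * (1 + Real.log t) := by
        apply mul_le_mul_of_nonneg_left _ (by positivity)
        have := harmonic_le_one_add_log t
        rw [harmonic_eq_sum_Icc] at this
        push_cast at this
        convert this using 2
    _ = θ ^ 2 * (Real.log t + 1) / t := by ring
end

section
/- Let ν > 0, θ > 0 with θν an integer satisfying 2 ≤ θν ≤ t, γ_i = θ/i and a_t^i = -γ_i ∏_{j=i+1}^t (1 - γ_j ν). Then ∑_{i=1}^t γ_i |a_t^i| ≤ θ^2 / t. -/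
open Finset

lemma prod_fac_nonneg (m i t : ℕ) (hmi : m ≤ i) :
    0 ≤ ∏ j ∈ Finset.Icc (i+1) t, (1 - (m:ℝ)/j) := by
  apply Finset.prod_nonneg
  intro j hj
  simp only [Finset.mem_Icc] at hj
  have hj0 : (0:ℝ) < j := by exact_mod_cast (by omega : 0 < j)
  have : (m:ℝ)/j ≤ 1 := by
    rw [div_le_one hj0]
    exact_mod_cast by omega
  linarith

lemma prod_telescope_le (m i : ℕ) (hm : 2 ≤ m) (hmi : m ≤ i) :
    ∀ t, i ≤ t →
      ∏ j ∈ Finset.Icc (i+1) t, (1 - (m:ℝ)/j)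
        ≤ ((i:ℝ)*((i:ℝ)-1))/((t:ℝ)*((t:ℝ)-1)) := by
  intro t ht
  induction t, ht using Nat.le_induction with
  | base =>
    rw [Finset.Icc_eq_empty (by omega), Finset.prod_empty]
    have hi : (2:ℝ) ≤ (i:ℝ) := by exact_mod_cast hm.trans hmi
    rw [div_self (by nlinarith)]
  | succ n hn ih =>
    rw [Finset.prod_Icc_succ_top (by omega)]
    have hn2 : (2:ℝ) ≤ (n:ℝ) := by
      have : 2 ≤ n := by omega
      exact_mod_cast this
    have hfac0 : (0:ℝ) ≤ 1 - (m:ℝ)/(n+1 : ℕ) := by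
      have h1 : (0:ℝ) < ((n+1 : ℕ):ℝ) := by positivity
      have : (m:ℝ)/((n+1:ℕ):ℝ) ≤ 1 := by
        rw [div_le_one h1]
        exact_mod_cast by omega
      linarith
    have hfac : (1 - (m:ℝ)/(n+1 : ℕ)) ≤ ((n:ℝ)-1)/((n:ℝ)+1) := by
      have h1 : (0:ℝ) < (n:ℝ)+1 := by linarith
      have hm2R : (2:ℝ) ≤ (m:ℝ) := by exact_mod_cast hm
      push_cast
      have hmono : (2:ℝ)/((n:ℝ)+1) ≤ (m:ℝ)/((n:ℝ)+1) := by gcongr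
      have heq : ((n:ℝ)-1)/((n:ℝ)+1) = 1 - 2/((n:ℝ)+1) := by
        field_simp
        ring
      linarith
    have hP0 := prod_fac_nonneg m i n hmi
    have hRHS0 : (0:ℝ) ≤ ((i:ℝ)*((i:ℝ)-1))/((n:ℝ)*((n:ℝ)-1)) := by
      have hi : (2:ℝ) ≤ (i:ℝ) := by exact_mod_cast hm.trans hmi
      apply div_nonneg <;> nlinarith
    calc (∏ j ∈ Finset.Icc (i+1) n, (1 - (m:ℝ)/j)) * (1 - (m:ℝ)/(n+1:ℕ))
        ≤ (((i:ℝ)*((i:ℝ)-1))/((n:ℝ)*((n:ℝ)-1))) * (((n:ℝ)-1)/((n:ℝ)+1)) := by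
          apply mul_le_mul ih hfac hfac0 hRHS0
      _ = ((i:ℝ)*((i:ℝ)-1))/(((n+1:ℕ):ℝ)*(((n+1:ℕ):ℝ)-1)) := by
          have h0 : (n:ℝ) ≠ 0 := by linarith
          have h1 : (n:ℝ) - 1 ≠ 0 := by intro h; linarith
          have h2 : (n:ℝ) + 1 ≠ 0 := by intro h; linarith
          push_cast
          rw [div_mul_div_comm, div_eq_div_iff (mul_ne_zero (mul_ne_zero h0 h1) h2) (by simpa using mul_ne_zero h2 h0)]
          ring

/-- If θν is an integer with 2 ≤ θν ≤ t then ∑_{i=1}^t γ_i |a_t^i| ≤ θ²/t. -/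
theorem gamma_coeff_sum_bound_int (ν θ : ℝ) (hν : 0 < ν) (hθ : 0 < θ) (t : ℕ)
    (hint : ∃ n : ℕ, θ * ν = n) (h2 : 2 ≤ θ * ν) (hle : θ * ν ≤ t) :
    ∑ i ∈ Finset.Icc 1 t,
        (θ / i) * |(-(θ / i) * ∏ j ∈ Finset.Icc (i + 1) t, (1 - (θ / j) * ν))|
      ≤ θ ^ 2 / t := by
  obtain ⟨m, hm⟩ := hint
  have hm2 : 2 ≤ m := by exact_mod_cast hm ▸ h2
  have hmt : m ≤ t := by exact_mod_cast hm ▸ hle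
  have ht2 : 2 ≤ t := hm2.trans hmt
  have htR : (2:ℝ) ≤ (t:ℝ) := by exact_mod_cast ht2
  -- rewrite each factor
  have hfac : ∀ j : ℕ, 1 - (θ/(j:ℝ))*ν = 1 - (m:ℝ)/j := by
    intro j
    rw [div_mul_eq_mul_div, hm]
  have key : ∀ i ∈ Finset.Icc 1 t,
      (θ / i) * |(-(θ / i) * ∏ j ∈ Finset.Icc (i + 1) t, (1 - (θ / j) * ν))|
        ≤ if m ≤ i then θ^2/((t:ℝ)*((t:ℝ)-1)) else 0 := by
    intro i hi
    simp only [Finset.mem_Icc] at hi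
    have hi0 : (0:ℝ) < (i:ℝ) := by exact_mod_cast hi.1
    have hprod : (∏ j ∈ Finset.Icc (i + 1) t, (1 - (θ / j) * ν))
        = ∏ j ∈ Finset.Icc (i + 1) t, (1 - (m:ℝ)/j) := by
      exact Finset.prod_congr rfl (fun j _ => hfac j)
    rw [hprod]
    by_cases hcase : m ≤ i
    · simp only [hcase, if_true]
      have hP0 := prod_fac_nonneg m i t hcase
      have hPle := prod_telescope_le m i hm2 hcase t hi.2
      have hiR : (2:ℝ) ≤ (i:ℝ) := by exact_mod_cast hm2.trans hcase
      rw [abs_mul, abs_neg, abs_of_nonneg (le_of_lt (div_pos hθ hi0)),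
          abs_of_nonneg hP0]
      have h1 : (θ/i) * ((θ/i) * ∏ j ∈ Finset.Icc (i + 1) t, (1 - (m:ℝ)/j))
          ≤ (θ/i)^2 * (((i:ℝ)*((i:ℝ)-1))/((t:ℝ)*((t:ℝ)-1))) := by
        rw [← mul_assoc, ← sq]
        apply mul_le_mul_of_nonneg_left hPle (by positivity)
      refine h1.trans ?_
      rw [div_pow]
      have hD : (0:ℝ) < (t:ℝ)*((t:ℝ)-1) := by nlinarith
      have heq : θ^2/(i:ℝ)^2 * (((i:ℝ)*((i:ℝ)-1))/((t:ℝ)*((t:ℝ)-1)))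
          = θ^2 * (((i:ℝ)-1)/(i:ℝ)) / ((t:ℝ)*((t:ℝ)-1)) := by
        have h0 : (i:ℝ) ≠ 0 := ne_of_gt hi0
        field_simp
      rw [heq, div_le_div_iff₀ hD hD]
      have hfrac : ((i:ℝ)-1)/(i:ℝ) ≤ 1 := by
        rw [div_le_one hi0]; linarith
      have hfrac0 : (0:ℝ) ≤ ((i:ℝ)-1)/(i:ℝ) := by
        apply div_nonneg (by linarith) (le_of_lt hi0)
      nlinarith [mul_nonneg (mul_nonneg (sq_nonneg θ) (sub_nonneg.mpr hfrac)) hD.le]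
    · simp only [hcase, if_false]
      have : (∏ j ∈ Finset.Icc (i + 1) t, (1 - (m:ℝ)/j)) = 0 := by
        apply Finset.prod_eq_zero (i := m) (by simp [Finset.mem_Icc]; omega)
        have hm0 : (0:ℝ) < (m:ℝ) := by exact_mod_cast by omega
        rw [div_self (ne_of_gt hm0)]; ring
      rw [this, mul_zero, abs_zero, mul_zero]
  refine (Finset.sum_le_sum key).trans ?_
  have hsum : ∑ i ∈ Finset.Icc 1 t, (if m ≤ i then θ^2/((t:ℝ)*((t:ℝ)-1)) else 0)
      = (Finset.Icc m t).card * (θ^2/((t:ℝ)*((t:ℝ)-1))) := by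
    rw [← Finset.sum_filter]
    have hfil : (Finset.Icc 1 t).filter (fun i => m ≤ i) = Finset.Icc m t := by
      ext x; simp only [Finset.mem_filter, Finset.mem_Icc]; omega
    rw [hfil, Finset.sum_const, nsmul_eq_mul]
  rw [hsum, Nat.card_Icc]
  have hcard : ((t + 1 - m : ℕ):ℝ) ≤ (t:ℝ) - 1 := by
    have h1 : t + 1 - m ≤ t - 1 := by omega
    have h2 : ((t - 1 : ℕ):ℝ) = (t:ℝ) - 1 := by
      push_cast [Nat.cast_sub (by omega : 1 ≤ t)]; ring
    calc ((t + 1 - m : ℕ):ℝ) ≤ ((t - 1 : ℕ):ℝ) := by exact_mod_cast h1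
      _ = (t:ℝ) - 1 := h2
  have hc0 : (0:ℝ) ≤ θ^2/((t:ℝ)*((t:ℝ)-1)) := by
    apply div_nonneg (by positivity); nlinarith
  calc ((t + 1 - m : ℕ):ℝ) * (θ^2/((t:ℝ)*((t:ℝ)-1)))
      ≤ ((t:ℝ) - 1) * (θ^2/((t:ℝ)*((t:ℝ)-1))) := by
        apply mul_le_mul_of_nonneg_right hcard hc0
    _ = θ^2/(t:ℝ) := by
        have h0 : (t:ℝ) ≠ 0 := by linarith
        have h1 : (t:ℝ) - 1 ≠ 0 := by intro h; linarith
        field_simp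
end
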